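/- Let Θ : ℝ^p × ℝ^p → ℝ^p be continuously differentiable on a neighborhood of (0,0) with Θ(0,0) = 0, and let φ : ℝ^p → ℝ^p be continuous at 0 with φ(0) = 0 and Θ(λ, φ(λ)) = 0 for all λ in a neighborhood of 0. Suppose there is K > 0 such that ‖Θ(λ,y) − Θ(λ,ỹ)‖ ≤ K‖y − ỹ‖ for all λ, y, ỹ in a neighborhood of 0, and suppose the partial derivative D₁Θ(0,0) of Θ in the first variable at (0,0) is an invertible linear map of ℝ^p. Then there exist C > 0 and δ > 0 such that ‖λ − λ̃‖ ≤ C‖φ(λ) − φ(λ̃)‖ for all λ, λ̃ with ‖λ‖ < δ and ‖λ̃‖ < δ. In particular, if φ is moreover Lipschitz on a neighborhood of 0, then φ is bi-Lipschitz on a neighborhood of 0. (The analytic core of Lemma 3.4: the map λ ↦ H₁(0,λ) has a Lipschitz inverse.) -/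

import Mathlib

open Filter

/-- The analytic core of Lemma 3.4: if `Θ` is `C¹` near the origin with
`Θ(0,0) = 0`, `φ` is continuous at `0` with `φ(0) = 0` and `Θ(λ, φ(λ)) = 0`
near `0`, `Θ` is `K`-Lipschitz in its second variable near `0`, and the
partial derivative `D₁Θ(0,0)` in the first variable is invertible, then
`‖λ − λ̃‖ ≤ C‖φ(λ) − φ(λ̃)‖` near `0`; in particular, if `φ` is moreover
Lipschitz near `0`, then `φ` is bi-Lipschitz near `0`. -/
theorem lipschitz_inverse (p : ℕ) (hp : 0 < p)
    (Θ : EuclideanSpace ℝ (Fin p) × EuclideanSpace ℝ (Fin p) → EuclideanSpace ℝ (Fin p))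
    (φ : EuclideanSpace ℝ (Fin p) → EuclideanSpace ℝ (Fin p))
    (hΘC1 : ∀ᶠ z in nhds ((0, 0) : EuclideanSpace ℝ (Fin p) × EuclideanSpace ℝ (Fin p)),
      ContDiffAt ℝ 1 Θ z)
    (hΘ0 : Θ (0, 0) = 0)
    (hφc : ContinuousAt φ 0) (hφ0 : φ 0 = 0)
    (hzero : ∀ᶠ lam in nhds (0 : EuclideanSpace ℝ (Fin p)), Θ (lam, φ lam) = 0)
    (hLip : ∃ K δ₀ : ℝ, 0 < K ∧ 0 < δ₀ ∧
      ∀ lam y y2 : EuclideanSpace ℝ (Fin p), ‖lam‖ < δ₀ → ‖y‖ < δ₀ → ‖y2‖ < δ₀ →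
        ‖Θ (lam, y) - Θ (lam, y2)‖ ≤ K * ‖y - y2‖)
    (hD₁ : Function.Bijective
      (fderiv ℝ (fun lam : EuclideanSpace ℝ (Fin p) => Θ (lam, 0)) 0)) :
    (∃ C δ : ℝ, 0 < C ∧ 0 < δ ∧
      ∀ lam lam' : EuclideanSpace ℝ (Fin p), ‖lam‖ < δ → ‖lam'‖ < δ →
        ‖lam - lam'‖ ≤ C * ‖φ lam - φ lam'‖) ∧
    (∀ Kφ δ₁ : ℝ, 0 < Kφ → 0 < δ₁ →
      (∀ a b : EuclideanSpace ℝ (Fin p), ‖a‖ < δ₁ → ‖b‖ < δ₁ →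
        ‖φ a - φ b‖ ≤ Kφ * ‖a - b‖) →
      ∃ c C δ₂ : ℝ, 0 < c ∧ 0 < C ∧ 0 < δ₂ ∧
        ∀ a b : EuclideanSpace ℝ (Fin p), ‖a‖ < δ₂ → ‖b‖ < δ₂ →
          c * ‖a - b‖ ≤ ‖φ a - φ b‖ ∧ ‖φ a - φ b‖ ≤ C * ‖a - b‖) := by
  have hC1 : ContDiffAt ℝ 1 Θ (0, 0) := hΘC1.self_of_nhds
  set D := fderiv ℝ Θ (0, 0) with hDdef
  have hd : HasStrictFDerivAt Θ D (0, 0) := hC1.hasStrictFDerivAt one_ne_zero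
  set A := D.comp (ContinuousLinearMap.inl ℝ (EuclideanSpace ℝ (Fin p))
    (EuclideanSpace ℝ (Fin p))) with hAdef
  set B := D.comp (ContinuousLinearMap.inr ℝ (EuclideanSpace ℝ (Fin p))
    (EuclideanSpace ℝ (Fin p))) with hBdef
  -- the fderiv of lam ↦ Θ (lam, 0) is A
  have hi : HasFDerivAt (fun lam : EuclideanSpace ℝ (Fin p) =>
      ((lam, 0) : EuclideanSpace ℝ (Fin p) × EuclideanSpace ℝ (Fin p)))
      (ContinuousLinearMap.inl ℝ _ _) 0 :=
    ((ContinuousLinearMap.inl ℝ (EuclideanSpace ℝ (Fin p))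
      (EuclideanSpace ℝ (Fin p))).hasFDerivAt (x := 0))
  have h1 : HasFDerivAt (fun lam : EuclideanSpace ℝ (Fin p) => Θ (lam, 0)) A 0 :=
    HasFDerivAt.comp (0 : EuclideanSpace ℝ (Fin p)) hd.hasFDerivAt hi
  have hAbij : Function.Bijective A := by
    rw [← h1.fderiv]; exact hD₁
  -- antilipschitz constant for A
  let e : EuclideanSpace ℝ (Fin p) ≃L[ℝ] EuclideanSpace ℝ (Fin p) :=
    (LinearEquiv.ofBijective (A : EuclideanSpace ℝ (Fin p) →ₗ[ℝ] EuclideanSpace ℝ (Fin p))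
      hAbij).toContinuousLinearEquiv
  set M : ℝ := ‖(e.symm : EuclideanSpace ℝ (Fin p) →L[ℝ] EuclideanSpace ℝ (Fin p))‖ with hMdef
  have hM0 : 0 ≤ M := norm_nonneg _
  have hkey : ∀ u : EuclideanSpace ℝ (Fin p), ‖u‖ ≤ M * ‖A u‖ := by
    intro u
    have heq : e u = A u := by
      show (LinearEquiv.ofBijective
        (A : EuclideanSpace ℝ (Fin p) →ₗ[ℝ] EuclideanSpace ℝ (Fin p))
        hAbij).toContinuousLinearEquiv u = A u
      rw [LinearEquiv.coe_toContinuousLinearEquiv']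
      simp
    calc ‖u‖ = ‖e.symm (e u)‖ := by rw [e.symm_apply_apply]
      _ ≤ M * ‖e u‖ :=
        (e.symm : EuclideanSpace ℝ (Fin p) →L[ℝ] EuclideanSpace ℝ (Fin p)).le_opNorm _
      _ = M * ‖A u‖ := by rw [heq]
  set ε : ℝ := 1 / (2 * (M + 1)) with hεdef
  have hεpos : 0 < ε := by positivity
  have hMε : M * ε ≤ 1 / 2 := by
    rw [hεdef, mul_one_div, div_le_div_iff₀ (by positivity) (by norm_num)]
    nlinarith
  -- extract the strict differentiability estimate
  have hev := hd.isLittleO.def hεpos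
  rw [Metric.eventually_nhds_iff] at hev
  obtain ⟨δ', hδ'pos, hest⟩ := hev
  rw [Metric.eventually_nhds_iff] at hzero
  obtain ⟨δz, hδzpos, hz⟩ := hzero
  have hball : ∀ᶠ y in nhds (0 : EuclideanSpace ℝ (Fin p)), ‖y‖ < δ' := by
    filter_upwards [Metric.ball_mem_nhds (0 : EuclideanSpace ℝ (Fin p)) hδ'pos] with y hy
    simpa [dist_zero_right] using hy
  have ht : Filter.Tendsto φ (nhds (0 : EuclideanSpace ℝ (Fin p)))
      (nhds (0 : EuclideanSpace ℝ (Fin p))) := by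
    have h := hφc
    rw [ContinuousAt, hφ0] at h
    exact h
  have hφsmall : ∀ᶠ lam in nhds (0 : EuclideanSpace ℝ (Fin p)), ‖φ lam‖ < δ' :=
    ht.eventually hball
  rw [Metric.eventually_nhds_iff] at hφsmall
  obtain ⟨δφ, hδφpos, hφs⟩ := hφsmall
  set δ : ℝ := min δ' (min δz δφ) with hδdef
  have hδpos : 0 < δ := lt_min hδ'pos (lt_min hδzpos hδφpos)
  set C : ℝ := 2 * M * ‖B‖ + 1 with hCdef
  have hCpos : 0 < C := by positivity
  have main : ∀ lam lam' : EuclideanSpace ℝ (Fin p), ‖lam‖ < δ → ‖lam'‖ < δ →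
      ‖lam - lam'‖ ≤ C * ‖φ lam - φ lam'‖ := by
    intro lam lam' hlam hlam'
    have hlamδ' : ‖lam‖ < δ' := lt_of_lt_of_le hlam (min_le_left _ _)
    have hlam'δ' : ‖lam'‖ < δ' := lt_of_lt_of_le hlam' (min_le_left _ _)
    have hlamδz : ‖lam‖ < δz := lt_of_lt_of_le hlam ((min_le_right _ _).trans (min_le_left _ _))
    have hlam'δz : ‖lam'‖ < δz :=
      lt_of_lt_of_le hlam' ((min_le_right _ _).trans (min_le_left _ _))
    have hlamδφ : ‖lam‖ < δφ := lt_of_lt_of_le hlam ((min_le_right _ _).trans (min_le_right _ _))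
    have hlam'δφ : ‖lam'‖ < δφ :=
      lt_of_lt_of_le hlam' ((min_le_right _ _).trans (min_le_right _ _))
    have hφ1 : ‖φ lam‖ < δ' := hφs (by simpa [dist_zero_right] using hlamδφ)
    have hφ2 : ‖φ lam'‖ < δ' := hφs (by simpa [dist_zero_right] using hlam'δφ)
    have hz1 : Θ (lam, φ lam) = 0 := hz (by simpa [dist_zero_right] using hlamδz)
    have hz2 : Θ (lam', φ lam') = 0 := hz (by simpa [dist_zero_right] using hlam'δz)
    have hdist : dist (((lam, φ lam), (lam', φ lam')) :
        (EuclideanSpace ℝ (Fin p) × EuclideanSpace ℝ (Fin p)) ×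
        (EuclideanSpace ℝ (Fin p) × EuclideanSpace ℝ (Fin p))) ((0, 0), (0, 0)) < δ' := by
      simp only [Prod.dist_eq, dist_zero_right, max_lt_iff]
      exact ⟨⟨hlamδ', hφ1⟩, hlam'δ', hφ2⟩
    have hq := hest hdist
    simp only [hz1, hz2, zero_sub, norm_neg, sub_zero] at hq
    set u : EuclideanSpace ℝ (Fin p) := lam - lam' with hudef
    set v : EuclideanSpace ℝ (Fin p) := φ lam - φ lam' with hvdef
    have hzw : ((lam, φ lam) : EuclideanSpace ℝ (Fin p) × EuclideanSpace ℝ (Fin p)) -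
        (lam', φ lam') = (u, v) := by
      rw [Prod.mk_sub_mk, ← hudef, ← hvdef]
    rw [hzw] at hq
    have hD_split : D ((u, v) : EuclideanSpace ℝ (Fin p) × EuclideanSpace ℝ (Fin p))
        = A u + B v := by
      have h2 : ((u, v) : EuclideanSpace ℝ (Fin p) × EuclideanSpace ℝ (Fin p))
          = (u, 0) + (0, v) := by simp
      rw [h2, map_add, hAdef, hBdef, ContinuousLinearMap.comp_apply,
        ContinuousLinearMap.comp_apply, ContinuousLinearMap.inl_apply,
        ContinuousLinearMap.inr_apply]
    have hnzw : ‖((u, v) : EuclideanSpace ℝ (Fin p) × EuclideanSpace ℝ (Fin p))‖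
        ≤ ‖u‖ + ‖v‖ := by
      have h3 : ‖((u, v) : EuclideanSpace ℝ (Fin p) × EuclideanSpace ℝ (Fin p))‖
          = max ‖u‖ ‖v‖ := Prod.norm_def _
      rw [h3]
      exact max_le (le_add_of_nonneg_right (norm_nonneg _))
        (le_add_of_nonneg_left (norm_nonneg _))
    have hq2 : ‖A u + B v‖ ≤ ε * (‖u‖ + ‖v‖) := by
      rw [← hD_split]
      exact hq.trans (mul_le_mul_of_nonneg_left hnzw hεpos.le)
    have hAu : ‖A u‖ ≤ ‖A u + B v‖ + ‖B v‖ := by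
      have h4 := norm_sub_le (A u + B v) (B v)
      simpa using h4
    have hBv : ‖B v‖ ≤ ‖B‖ * ‖v‖ := B.le_opNorm v
    have hu : ‖u‖ ≤ M * ‖A u‖ := hkey u
    have hnB : (0:ℝ) ≤ ‖B‖ := norm_nonneg _
    have hnu : (0:ℝ) ≤ ‖u‖ := norm_nonneg _
    have hnv : (0:ℝ) ≤ ‖v‖ := norm_nonneg _
    have step : ‖u‖ ≤ M * ‖B‖ * ‖v‖ + M * ε * ‖u‖ + M * ε * ‖v‖ := by
      calc ‖u‖ ≤ M * ‖A u‖ := hu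
        _ ≤ M * (‖A u + B v‖ + ‖B v‖) := mul_le_mul_of_nonneg_left hAu hM0
        _ ≤ M * (ε * (‖u‖ + ‖v‖) + (‖B‖ * ‖v‖)) :=
            mul_le_mul_of_nonneg_left (add_le_add hq2 hBv) hM0
        _ = M * ‖B‖ * ‖v‖ + M * ε * ‖u‖ + M * ε * ‖v‖ := by ring
    have hexp : (2 * M * ‖B‖ + 1) * ‖v‖ = 2 * (M * ‖B‖ * ‖v‖) + ‖v‖ := by ring
    rw [hCdef, hexp]
    linarith [step, mul_le_mul_of_nonneg_right hMε hnu, mul_le_mul_of_nonneg_right hMε hnv]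
  refine ⟨⟨C, δ, hCpos, hδpos, main⟩, ?_⟩
  intro Kφ δ₁ hKφ hδ₁ hlip
  refine ⟨1 / C, Kφ, min δ δ₁, by positivity, hKφ, lt_min hδpos hδ₁, ?_⟩
  intro a b ha hb
  have ha1 : ‖a‖ < δ := lt_of_lt_of_le ha (min_le_left _ _)
  have hb1 : ‖b‖ < δ := lt_of_lt_of_le hb (min_le_left _ _)
  have ha2 : ‖a‖ < δ₁ := lt_of_lt_of_le ha (min_le_right _ _)
  have hb2 : ‖b‖ < δ₁ := lt_of_lt_of_le hb (min_le_right _ _)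
  refine ⟨?_, hlip a b ha2 hb2⟩
  have hx := main a b ha1 hb1
  calc (1 / C) * ‖a - b‖ ≤ (1 / C) * (C * ‖φ a - φ b‖) :=
      mul_le_mul_of_nonneg_left hx (by positivity)
    _ = ‖φ a - φ b‖ := by field_simp
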